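/- Symmetrization trick for quadratic forms on a cone: Let K ⊂ R^p be a convex cone and B a symmetric p×p matrix. Then sup_{x,y ∈ K∩S^{p-1}} |x^T B y| ≤ 3 sup_{x ∈ K∩S^{p-1}} |x^T B x|. -/

import Mathlib

open Matrix

/-- Euclidean norm of a vector in `Fin p → ℝ`. -/
noncomputable def vecEnorm {p : ℕ} (v : Fin p → ℝ) : ℝ := Real.sqrt (v ⬝ᵥ v)

/-- The cone-restricted operator seminorm
`‖B‖_C = sup_{x,y ∈ C, ‖x‖=‖y‖=1} |xᵀ B y|`. -/
noncomputable def coneNorm {p : ℕ} (C : Set (Fin p → ℝ)) (B : Matrix (Fin p) (Fin p) ℝ) : ℝ :=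
  sSup {r : ℝ | ∃ x ∈ C, ∃ y ∈ C, vecEnorm x = 1 ∧ vecEnorm y = 1 ∧ r = |x ⬝ᵥ B.mulVec y|}


section aux
variable {p : ℕ}

lemma dot_self_nonneg (v : Fin p → ℝ) : 0 ≤ v ⬝ᵥ v :=
  Finset.sum_nonneg fun i _ => mul_self_nonneg _

lemma enorm_sq (v : Fin p → ℝ) : vecEnorm v ^ 2 = v ⬝ᵥ v := by
  rw [vecEnorm, Real.sq_sqrt (dot_self_nonneg v)]

lemma abs_entry_le (v : Fin p → ℝ) (hv : vecEnorm v = 1) (i : Fin p) : |v i| ≤ 1 := by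
  have h1 : v ⬝ᵥ v = 1 := by rw [← enorm_sq, hv]; norm_num
  have : v i * v i ≤ v ⬝ᵥ v :=
    Finset.single_le_sum (f := fun j => v j * v j)
      (fun j _ => mul_self_nonneg _) (Finset.mem_univ i)
  nlinarith [abs_nonneg (v i), sq_abs (v i)]

lemma quad_bound (B : Matrix (Fin p) (Fin p) ℝ) (x y : Fin p → ℝ)
    (hx : vecEnorm x = 1) (hy : vecEnorm y = 1) :
    |x ⬝ᵥ B.mulVec y| ≤ ∑ i, ∑ j, |B i j| := by
  calc |x ⬝ᵥ B.mulVec y| = |∑ i, x i * ∑ j, B i j * y j| := rfl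
    _ ≤ ∑ i, |x i * ∑ j, B i j * y j| := Finset.abs_sum_le_sum_abs _ _
    _ ≤ ∑ i, ∑ j, |B i j| := by
        refine Finset.sum_le_sum fun i _ => ?_
        rw [abs_mul]
        calc |x i| * |∑ j, B i j * y j| ≤ 1 * ∑ j, |B i j * y j| := by
              exact mul_le_mul (abs_entry_le x hx i) (Finset.abs_sum_le_sum_abs _ _)
                (abs_nonneg _) zero_le_one
          _ ≤ ∑ j, |B i j| := by
              rw [one_mul]
              refine Finset.sum_le_sum fun j _ => ?_
              rw [abs_mul]
              exact mul_le_of_le_one_right (abs_nonneg _) (abs_entry_le y hy j)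

lemma dot_symm (B : Matrix (Fin p) (Fin p) ℝ) (hB : B.IsSymm) (x y : Fin p → ℝ) :
    x ⬝ᵥ B.mulVec y = y ⬝ᵥ B.mulVec x := by
  rw [Matrix.dotProduct_mulVec, ← Matrix.mulVec_transpose, hB.eq, dotProduct_comm]

end aux

/-- Symmetrization trick: for a convex cone `K` and a symmetric matrix `B`,
`sup_{x,y ∈ K ∩ S} |xᵀ B y| ≤ 3 sup_{x ∈ K ∩ S} |xᵀ B x|`. -/
theorem coneNorm_le_three_mul_diag_sup {p : ℕ}
    (K : ConvexCone ℝ (Fin p → ℝ)) (B : Matrix (Fin p) (Fin p) ℝ) (hB : B.IsSymm) :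
    coneNorm (K : Set (Fin p → ℝ)) B ≤
      3 * sSup {r : ℝ | ∃ x ∈ K, vecEnorm x = 1 ∧ r = |x ⬝ᵥ B.mulVec x|} := by
  set S := {r : ℝ | ∃ x ∈ K, vecEnorm x = 1 ∧ r = |x ⬝ᵥ B.mulVec x|} with hS
  set D := sSup S with hD
  have hbdd : BddAbove S := by
    refine ⟨∑ i, ∑ j, |B i j|, fun r hr => ?_⟩
    obtain ⟨x, _, hx1, rfl⟩ := hr
    exact quad_bound B x x hx1 hx1
  have hmem : ∀ x ∈ K, vecEnorm x = 1 → |x ⬝ᵥ B.mulVec x| ≤ D :=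
    fun x hx hx1 => le_csSup hbdd ⟨x, hx, hx1, rfl⟩
  refine Real.sSup_le ?_ ?_
  · rintro r ⟨x, hxK, y, hyK, hx1, hy1, rfl⟩
    have hDnn : 0 ≤ D := le_trans (abs_nonneg _) (hmem x hxK hx1)
    -- Cauchy-Schwarz ⇒ x ⬝ᵥ y ≤ 1
    have hxx : x ⬝ᵥ x = 1 := by rw [← enorm_sq, hx1]; norm_num
    have hyy : y ⬝ᵥ y = 1 := by rw [← enorm_sq, hy1]; norm_num
    have hcs : (x ⬝ᵥ y) ^ 2 ≤ (x ⬝ᵥ x) * (y ⬝ᵥ y) := by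
      have := Finset.sum_mul_sq_le_sq_mul_sq Finset.univ x y
      simpa [dotProduct, sq, Finset.mul_sum, mul_comm, mul_left_comm] using this
    have hxy : x ⬝ᵥ y ≤ 1 := by nlinarith
    -- s = x + y
    set s := x + y with hs
    have hsK : s ∈ K := K.add_mem hxK hyK
    have hss : s ⬝ᵥ s = 2 + 2 * (x ⬝ᵥ y) := by
      simp only [hs, add_dotProduct, dotProduct_add, dotProduct_comm y x]
      rw [hxx, hyy]; ring
    have hss4 : s ⬝ᵥ s ≤ 4 := by linarith
    have hpolar : s ⬝ᵥ B.mulVec s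
        = x ⬝ᵥ B.mulVec x + 2 * (x ⬝ᵥ B.mulVec y) + y ⬝ᵥ B.mulVec y := by
      simp only [hs, Matrix.mulVec_add, add_dotProduct, dotProduct_add,
        dot_symm B hB y x]
      ring
    have hsBs : |s ⬝ᵥ B.mulVec s| ≤ 4 * D := by
      rcases eq_or_lt_of_le (dot_self_nonneg s) with h0 | h0
      · have : s = 0 := by
          funext i
          have h1 : s i * s i ≤ 0 := by
            rw [h0]
            exact Finset.single_le_sum (f := fun j => s j * s j)
              (fun j _ => mul_self_nonneg _) (Finset.mem_univ i)
          simp only [Pi.zero_apply]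
          nlinarith [mul_self_nonneg (s i)]
        simp [this]
        linarith
      · set n := vecEnorm s with hn
        have hn0 : 0 < n := Real.sqrt_pos.mpr h0
        have hn2 : n ^ 2 = s ⬝ᵥ s := enorm_sq s
        have hnle : n ≤ 2 := by nlinarith
        set z := n⁻¹ • s with hz
        have hzK : z ∈ K := K.smul_mem (inv_pos.mpr hn0) hsK
        have hz1 : vecEnorm z = 1 := by
          have hzz : z ⬝ᵥ z = 1 := by
            rw [hz, smul_dotProduct, dotProduct_smul, smul_eq_mul, smul_eq_mul, ← hn2]
            field_simp
          rw [vecEnorm, hzz, Real.sqrt_one]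
        have hzBz : z ⬝ᵥ B.mulVec z = n⁻¹ * n⁻¹ * (s ⬝ᵥ B.mulVec s) := by
          rw [hz, Matrix.mulVec_smul, smul_dotProduct, dotProduct_smul,
            smul_eq_mul, smul_eq_mul]; ring
        have hle := hmem z hzK hz1
        rw [hzBz, abs_mul, abs_mul, abs_inv, abs_of_pos hn0] at hle
        have hle' : n⁻¹ * n⁻¹ * |s ⬝ᵥ B.mulVec s| ≤ D := hle
        have hmul := mul_le_mul_of_nonneg_left hle' (by positivity : (0:ℝ) ≤ n ^ 2)
        have heq : n ^ 2 * (n⁻¹ * n⁻¹ * |s ⬝ᵥ B.mulVec s|) = |s ⬝ᵥ B.mulVec s| := by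
          field_simp
        rw [heq] at hmul
        nlinarith
    have h1 := hmem x hxK hx1
    have h2 := hmem y hyK hy1
    have := abs_sub_abs_le_abs_sub (2 * (x ⬝ᵥ B.mulVec y))
      (x ⬝ᵥ B.mulVec x + y ⬝ᵥ B.mulVec y)
    have habs : |2 * (x ⬝ᵥ B.mulVec y)| ≤ 6 * D := by
      have key : 2 * (x ⬝ᵥ B.mulVec y)
          = s ⬝ᵥ B.mulVec s - (x ⬝ᵥ B.mulVec x + y ⬝ᵥ B.mulVec y) := by
        rw [hpolar]; ring
      calc |2 * (x ⬝ᵥ B.mulVec y)|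
          ≤ |s ⬝ᵥ B.mulVec s| + |x ⬝ᵥ B.mulVec x + y ⬝ᵥ B.mulVec y| := by
            rw [key]; exact abs_sub _ _
        _ ≤ 4 * D + (|x ⬝ᵥ B.mulVec x| + |y ⬝ᵥ B.mulVec y|) :=
            add_le_add hsBs (abs_add_le _ _)
        _ ≤ 6 * D := by linarith
    rw [abs_mul] at habs
    simp only [abs_two] at habs
    linarith
  · rcases Set.eq_empty_or_nonempty S with hSe | ⟨r, hr⟩
    · rw [hD, hSe, Real.sSup_empty]; norm_num
    · have : 0 ≤ r := by obtain ⟨x, _, _, rfl⟩ := hr; exact abs_nonneg _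
      have := le_csSup hbdd hr
      linarith
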